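/- For every r ∈ (0,1), the pair (μ_r, ν_r) belongs to the family R, i.e., for every Borel set A ⊆ [0,1], ∫_A (1−x) dμ_r^x = ∫_A x dν_r^x and ∫_B (1−y) dμ_r^y = ∫_B y dν_r^y; equivalently, m_r = μ_r + ν_r is a coherent distribution. -/

import Mathlib

open MeasureTheory Set

noncomputable section

/-- The full tent map on `[0,1]`. -/
def T2 : ℝ → ℝ := fun x => 2 * min x (1 - x)

/-- The rescaled tent map `t_r` on `[0,r]`. -/
def tent (r : ℝ) : ℝ → ℝ := fun x => 2 * min x (r - x)

/-- The normalizing constant `c_r = -log(1-r)`. -/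
def cr (r : ℝ) : ℝ := -Real.log (1 - r)

/-- The measure `μ_r`, supported on the diagonal `Δ_r`. -/
def muR (r : ℝ) : Measure (ℝ × ℝ) :=
  ((volume.restrict (Icc (0:ℝ) r)).withDensity
      (fun s => ENNReal.ofReal ((cr r)⁻¹ * (s / (1 - s))))).map (fun s => (s, s))

/-- The measure `ν_r`, supported on the graph `Γ_r` of `t_r`. -/
def nuR (r : ℝ) : Measure (ℝ × ℝ) :=
  ((volume.restrict (Icc (0:ℝ) r)).withDensity
      (fun _ => ENNReal.ofReal (cr r)⁻¹)).map (fun s => (s, tent r s))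

/-- The uniform probability distribution on `[0,r]`. -/
def unif (r : ℝ) : Measure ℝ := (ENNReal.ofReal r)⁻¹ • volume.restrict (Icc (0:ℝ) r)

variable {r : ℝ}

lemma tent_meas (r : ℝ) : Measurable (tent r) := by
  unfold tent; fun_prop

lemma cr_pos (hr : r ∈ Ioo (0:ℝ) 1) : 0 < cr r := by
  have : Real.log (1 - r) < 0 := Real.log_neg (by linarith [hr.2]) (by linarith [hr.1])
  unfold cr; linarith

lemma cr_ge (hr : r ∈ Ioo (0:ℝ) 1) : r ≤ cr r := by
  have := Real.log_le_sub_one_of_pos (x := 1 - r) (by linarith [hr.2])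
  unfold cr; linarith

lemma map_tent_volume (hr : r ∈ Ioo (0:ℝ) 1) :
    (volume.restrict (Icc (0:ℝ) r)).map (tent r) = volume.restrict (Icc (0:ℝ) r) := by
  ext B hB
  rw [Measure.map_apply (tent_meas r) hB, Measure.restrict_apply (tent_meas r hB),
    Measure.restrict_apply hB]
  set B' := B ∩ Icc (0:ℝ) r with hB'def
  have hsub : B' ⊆ Icc 0 r := inter_subset_right
  have hkey : tent r ⁻¹' B ∩ Icc (0:ℝ) r
      = ((2 * ·) ⁻¹' B') ∪ ((fun x => (-2) * x) ⁻¹' ((fun y => 2*r + y) ⁻¹' B')) := by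
    ext x
    simp only [mem_inter_iff, mem_union, mem_preimage, mem_Icc, hB'def, tent]
    constructor
    · rintro ⟨hxB, hx0, hxr⟩
      rcases le_total x (r - x) with h | h
      · left
        rw [min_eq_left h] at hxB
        exact ⟨hxB, by linarith, by linarith⟩
      · right
        rw [min_eq_right h] at hxB
        have e : 2*r + (-2)*x = 2*(r - x) := by ring
        rw [e]
        exact ⟨hxB, by linarith, by linarith⟩
    · rintro (⟨h1, h2, h3⟩ | ⟨h1, h2, h3⟩)
      · have hm : min x (r - x) = x := min_eq_left (by linarith)
        rw [hm]
        exact ⟨h1, by linarith, by linarith⟩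
      · have hm : min x (r - x) = r - x := min_eq_right (by linarith)
        rw [hm]
        have e : 2*(r - x) = 2*r + (-2)*x := by ring
        rw [e]
        refine ⟨h1, by linarith [hr.1], by linarith⟩
  rw [hkey]
  have hB'm : MeasurableSet B' := hB.inter measurableSet_Icc
  have hm2 : MeasurableSet ((fun x : ℝ => (-2) * x) ⁻¹' ((fun y => 2*r + y) ⁻¹' B')) :=
    (hB'm.preimage (measurable_const_add _)).preimage (measurable_const_mul _)
  have hdisj : volume (((2 * ·) ⁻¹' B') ∩
      ((fun x : ℝ => (-2) * x) ⁻¹' ((fun y => 2*r + y) ⁻¹' B'))) = 0 := by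
    refine measure_mono_null ?_ (measure_singleton (r/2))
    rintro x ⟨hx1, hx2⟩
    have e1 : 2*x ≤ r := (hsub hx1).2
    have e2 : 2*r + (-2)*x ≤ r := (hsub hx2).2
    have : x = r/2 := by linarith
    simp [this]
  rw [measure_union₀ hm2.nullMeasurableSet hdisj,
    Real.volume_preimage_mul_left (by norm_num : (2:ℝ) ≠ 0),
    Real.volume_preimage_mul_left (by norm_num : (-2:ℝ) ≠ 0),
    measure_preimage_add volume (2*r) B', ← add_mul,
    ← ENNReal.ofReal_add (by positivity) (by positivity)]
  norm_num [abs_of_nonneg]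

lemma muR_fst (r : ℝ) : (muR r).map Prod.fst
    = (volume.restrict (Icc (0:ℝ) r)).withDensity
      (fun s => ENNReal.ofReal ((cr r)⁻¹ * (s / (1 - s)))) := by
  unfold muR
  rw [Measure.map_map measurable_fst (by fun_prop : Measurable fun s : ℝ => (s, s))]
  exact Measure.map_id'

lemma muR_snd (r : ℝ) : (muR r).map Prod.snd
    = (volume.restrict (Icc (0:ℝ) r)).withDensity
      (fun s => ENNReal.ofReal ((cr r)⁻¹ * (s / (1 - s)))) := by
  unfold muR
  rw [Measure.map_map measurable_snd (by fun_prop : Measurable fun s : ℝ => (s, s))]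
  exact Measure.map_id'

lemma nuR_fst (r : ℝ) : (nuR r).map Prod.fst
    = ENNReal.ofReal (cr r)⁻¹ • volume.restrict (Icc (0:ℝ) r) := by
  unfold nuR
  rw [Measure.map_map measurable_fst (by exact measurable_id.prodMk (tent_meas r) : Measurable fun s : ℝ => (s, tent r s)),
    withDensity_const]
  exact Measure.map_id'

lemma nuR_snd (hr : r ∈ Ioo (0:ℝ) 1) : (nuR r).map Prod.snd
    = ENNReal.ofReal (cr r)⁻¹ • volume.restrict (Icc (0:ℝ) r) := by
  unfold nuR
  rw [withDensity_const, Measure.map_map measurable_snd (by exact measurable_id.prodMk (tent_meas r) : Measurable fun s : ℝ => (s, tent r s)),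
    Measure.map_smul]
  congr 1
  have : Prod.snd ∘ (fun s : ℝ => (s, tent r s)) = tent r := rfl
  rw [this]
  exact map_tent_volume hr

lemma marginal_eq (hr : r ∈ Ioo (0:ℝ) 1) (A : Set ℝ) (hA : MeasurableSet A) :
    ∫⁻ x in A, ENNReal.ofReal (1 - x)
        ∂((volume.restrict (Icc (0:ℝ) r)).withDensity
          (fun s => ENNReal.ofReal ((cr r)⁻¹ * (s / (1 - s)))))
      = ∫⁻ x in A, ENNReal.ofReal x
        ∂(ENNReal.ofReal (cr r)⁻¹ • volume.restrict (Icc (0:ℝ) r)) := by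
  have hc := cr_pos hr
  have hfm : Measurable (fun s : ℝ => ENNReal.ofReal ((cr r)⁻¹ * (s / (1 - s)))) := by
    apply Measurable.ennreal_ofReal
    exact measurable_const.mul (measurable_id.div (measurable_const.sub measurable_id))
  rw [setLIntegral_withDensity_eq_setLIntegral_mul _ hfm (by fun_prop) hA,
    setLIntegral_smul_measure, smul_eq_mul, ← lintegral_const_mul _ (by fun_prop),
    Measure.restrict_restrict hA]
  apply setLIntegral_congr_fun (hA.inter measurableSet_Icc)
  unfold EqOn
  rintro x ⟨-, hx0, hxr⟩
  have h1x : (0:ℝ) < 1 - x := by linarith [hr.2]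
  simp only [Pi.mul_apply]
  rw [← ENNReal.ofReal_mul (mul_nonneg (inv_nonneg.2 hc.le) (div_nonneg hx0 h1x.le)),
    ← ENNReal.ofReal_mul (inv_nonneg.2 hc.le)]
  congr 1
  field_simp

lemma muR_univ (hr : r ∈ Ioo (0:ℝ) 1) :
    muR r univ = ENNReal.ofReal ((cr r)⁻¹ * (cr r - r)) := by
  have hc := cr_pos hr
  unfold muR
  rw [Measure.map_apply (by exact measurable_id.prodMk measurable_id) MeasurableSet.univ,
    preimage_univ, withDensity_apply _ MeasurableSet.univ, Measure.restrict_univ]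
  have hcont : ContinuousOn (fun s : ℝ => (cr r)⁻¹ * (s / (1 - s))) (Icc 0 r) := by
    apply continuousOn_const.mul
    apply ContinuousOn.div continuousOn_id (continuousOn_const.sub continuousOn_id)
    intro x hx
    have := hx.2
    have : x < 1 := lt_of_le_of_lt this hr.2
    show (1:ℝ) - x ≠ 0; rw [sub_ne_zero]
    exact fun h => absurd h.symm (ne_of_lt this)
  have hint : IntegrableOn (fun s : ℝ => (cr r)⁻¹ * (s / (1 - s))) (Icc 0 r) :=
    hcont.integrableOn_Icc
  have hnn : 0 ≤ᵐ[volume.restrict (Icc (0:ℝ) r)] fun s : ℝ => (cr r)⁻¹ * (s / (1 - s)) := by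
    filter_upwards [ae_restrict_mem measurableSet_Icc] with x hx
    have h1x : (0:ℝ) < 1 - x := by linarith [hx.2, hr.2]
    exact mul_nonneg (inv_nonneg.2 hc.le) (div_nonneg hx.1 h1x.le)
  rw [← ofReal_integral_eq_lintegral_ofReal hint hnn]
  congr 1
  rw [show ∫ x, (cr r)⁻¹ * (x / (1 - x)) ∂(volume.restrict (Icc (0:ℝ) r))
      = ∫ x in Icc (0:ℝ) r, (cr r)⁻¹ * (x / (1 - x)) from rfl,
    MeasureTheory.integral_Icc_eq_integral_Ioc,
    ← intervalIntegral.integral_of_le hr.1.le, intervalIntegral.integral_const_mul]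
  congr 1
  have hderiv : ∀ s ∈ uIcc (0:ℝ) r,
      HasDerivAt (fun u : ℝ => -Real.log (1 - u) - u) (s / (1 - s)) s := by
    intro s hs
    rw [uIcc_of_le hr.1.le, mem_Icc] at hs
    have h1s : (1:ℝ) - s ≠ 0 := by
      have : s < 1 := lt_of_le_of_lt hs.2 hr.2
      intro h; linarith [h]
    have h1 : HasDerivAt (fun u : ℝ => 1 - u) (-1) s := by
      simpa using (hasDerivAt_id s).const_sub 1
    have h2 : HasDerivAt (fun u : ℝ => Real.log (1 - u)) (-1 / (1 - s)) s := h1.log h1s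
    have h3 : HasDerivAt (fun u : ℝ => -Real.log (1 - u) - u) (-(-1 / (1 - s)) - 1) s :=
      h2.neg.sub (hasDerivAt_id' (x := s))
    convert h3 using 1
    field_simp
    ring
  have hii : IntervalIntegrable (fun s : ℝ => s / (1 - s)) volume 0 r := by
    apply ContinuousOn.intervalIntegrable
    rw [uIcc_of_le hr.1.le]
    apply ContinuousOn.div continuousOn_id (continuousOn_const.sub continuousOn_id)
    intro x hx
    have : x < 1 := lt_of_le_of_lt hx.2 hr.2
    show (1:ℝ) - x ≠ 0; rw [sub_ne_zero]
    exact fun h => absurd h.symm (ne_of_lt this)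
  rw [intervalIntegral.integral_eq_sub_of_hasDerivAt hderiv hii]
  simp [cr]

lemma nuR_univ (hr : r ∈ Ioo (0:ℝ) 1) :
    nuR r univ = ENNReal.ofReal ((cr r)⁻¹ * r) := by
  have hc := cr_pos hr
  unfold nuR
  rw [Measure.map_apply (by exact measurable_id.prodMk (tent_meas r)) MeasurableSet.univ,
    preimage_univ, withDensity_const]
  simp [Real.volume_Icc, ← ENNReal.ofReal_mul (inv_nonneg.2 hc.le)]

lemma muR_supp (hr : r ∈ Ioo (0:ℝ) 1) : muR r ((Icc (0:ℝ) 1 ×ˢ Icc (0:ℝ) 1)ᶜ) = 0 := by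
  have hms : MeasurableSet ((Icc (0:ℝ) 1 ×ˢ Icc (0:ℝ) 1)ᶜ : Set (ℝ × ℝ)) :=
    (measurableSet_Icc.prod measurableSet_Icc).compl
  have hdm : Measurable (fun s : ℝ => (s, s)) := measurable_id.prodMk measurable_id
  have hempty : (fun s : ℝ => (s, s)) ⁻¹' (Icc (0:ℝ) 1 ×ˢ Icc (0:ℝ) 1)ᶜ ∩ Icc (0:ℝ) r = ∅ := by
    rw [eq_empty_iff_forall_notMem]
    rintro x ⟨hcm, hx⟩
    rw [mem_Icc] at hx
    exact hcm ⟨⟨hx.1, le_trans hx.2 hr.2.le⟩, hx.1, le_trans hx.2 hr.2.le⟩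
  unfold muR
  rw [Measure.map_apply hdm hms, withDensity_apply _ (hdm hms)]
  apply setLIntegral_measure_zero
  rw [Measure.restrict_apply (hdm hms), hempty, measure_empty]

lemma nuR_supp (hr : r ∈ Ioo (0:ℝ) 1) : nuR r ((Icc (0:ℝ) 1 ×ˢ Icc (0:ℝ) 1)ᶜ) = 0 := by
  have hms : MeasurableSet ((Icc (0:ℝ) 1 ×ˢ Icc (0:ℝ) 1)ᶜ : Set (ℝ × ℝ)) :=
    (measurableSet_Icc.prod measurableSet_Icc).compl
  have hdm : Measurable (fun s : ℝ => (s, tent r s)) := measurable_id.prodMk (tent_meas r)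
  have hempty : (fun s : ℝ => (s, tent r s)) ⁻¹' (Icc (0:ℝ) 1 ×ˢ Icc (0:ℝ) 1)ᶜ ∩ Icc (0:ℝ) r
      = ∅ := by
    rw [eq_empty_iff_forall_notMem]
    rintro x ⟨hcm, hx⟩
    rw [mem_Icc] at hx
    have h1 : 0 ≤ tent r x := by
      unfold tent
      have : 0 ≤ min x (r - x) := le_min hx.1 (by linarith [hx.2])
      linarith
    have h2 : tent r x ≤ 1 := by
      unfold tent
      have a1 := min_le_left x (r - x)
      have a2 := min_le_right x (r - x)
      linarith [hr.2]
    exact hcm ⟨⟨hx.1, le_trans hx.2 hr.2.le⟩, h1, h2⟩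
  unfold nuR
  rw [Measure.map_apply hdm hms, withDensity_const, Measure.smul_apply,
    Measure.restrict_apply (hdm hms), hempty, measure_empty, smul_zero]

/-- The family `R`: pairs of nonnegative finite Borel measures on `[0,1]²`
with the marginal balance conditions. -/
structure MemR (μ ν : Measure (ℝ × ℝ)) : Prop where
  fin_mu : μ univ ≠ ⊤
  fin_nu : ν univ ≠ ⊤
  supp_mu : μ ((Icc (0:ℝ) 1 ×ˢ Icc (0:ℝ) 1)ᶜ) = 0
  supp_nu : ν ((Icc (0:ℝ) 1 ×ˢ Icc (0:ℝ) 1)ᶜ) = 0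
  eq_x : ∀ A : Set ℝ, MeasurableSet A →
    ∫⁻ x in A, ENNReal.ofReal (1 - x) ∂(μ.map Prod.fst) =
      ∫⁻ x in A, ENNReal.ofReal x ∂(ν.map Prod.fst)
  eq_y : ∀ B : Set ℝ, MeasurableSet B →
    ∫⁻ y in B, ENNReal.ofReal (1 - y) ∂(μ.map Prod.snd) =
      ∫⁻ y in B, ENNReal.ofReal y ∂(ν.map Prod.snd)

/-- A coherent distribution: a probability measure on `[0,1]²` of the form
`μ + ν` for some `(μ,ν) ∈ R`. -/
def Coherent (m : Measure (ℝ × ℝ)) : Prop :=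
  IsProbabilityMeasure m ∧ ∃ μ ν : Measure (ℝ × ℝ), MemR μ ν ∧ m = μ + ν

/-- `(μ_r, ν_r) ∈ R`; equivalently `m_r = μ_r + ν_r` is coherent. -/
theorem muR_nuR_memR (r : ℝ) (hr : r ∈ Ioo (0:ℝ) 1) :
    MemR (muR r) (nuR r) ∧ Coherent (muR r + nuR r) := by
  have hc := cr_pos hr
  have hcr := cr_ge hr
  have hmem : MemR (muR r) (nuR r) := by
    refine ⟨?_, ?_, muR_supp hr, nuR_supp hr, ?_, ?_⟩
    · rw [muR_univ hr]; exact ENNReal.ofReal_ne_top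
    · rw [nuR_univ hr]; exact ENNReal.ofReal_ne_top
    · intro A hA
      rw [muR_fst, nuR_fst]
      exact marginal_eq hr A hA
    · intro B hB
      rw [muR_snd, nuR_snd hr]
      exact marginal_eq hr B hB
  refine ⟨hmem, ⟨?_⟩, muR r, nuR r, hmem, rfl⟩
  rw [Measure.add_apply, muR_univ hr, nuR_univ hr,
    ← ENNReal.ofReal_add (mul_nonneg (inv_nonneg.2 hc.le) (by linarith))
      (mul_nonneg (inv_nonneg.2 hc.le) hr.1.le)]
  rw [show (cr r)⁻¹ * (cr r - r) + (cr r)⁻¹ * r = 1 by field_simp; ring]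
  exact ENNReal.ofReal_one
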